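/- Fix τ ∈ K, char K = 0, τ ≠ 0. In K[[x₁,x₂]], define G(x₁,x₂) = -((τ+1)/τ)·Σ_{μ₁,μ₂≥1} (x₁^{μ₁}x₂^{μ₂}/(μ₁+μ₂))·∏_{i=1,2}(∏_{a=0}^{μ_i-1}(μ_iτ+a)/μ_i!). Let ω_i = ω(x_i) be the compositional inverse series of x(1-x)^τ evaluated in x_i. Then (x₁∂/∂x₁ + x₂∂/∂x₂)G = -τ(τ+1)·ω₁ω₂/((1-(τ+1)ω₁)(1-(τ+1)ω₂)). -/

import Mathlib

open Finset

variable {K : Type*} [Field K]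

/-- `p τ m = ∏_{a=0}^{m-1}(mτ+a)/m!`. -/
noncomputable def pCoeff [CharZero K] (τ : K) (m : ℕ) : K :=
  (∏ a ∈ Finset.range m, ((m : K) * τ + a)) / (m.factorial : K)

/-- Coefficients of `ω(x) = ∑_{n≥1} (∏_{a=0}^{n-2}(nτ+a)/n!) x^n`, the compositional
inverse of `x(1-x)^τ`. -/
noncomputable def omegaCoeff [CharZero K] (τ : K) (n : ℕ) : K :=
  if n = 0 then 0 else (∏ a ∈ Finset.range (n - 1), ((n : K) * τ + a)) / (n.factorial : K)

/-- `ω(x_i)`: the series `ω` in the variable `x_i`, as a two-variable power series. -/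
noncomputable def OmegaVar [CharZero K] (τ : K) (i : Fin 2) : MvPowerSeries (Fin 2) K :=
  fun d => if d = Finsupp.single i (d i) then omegaCoeff τ (d i) else 0

/-- `G(x₁,x₂) = -((τ+1)/τ) ∑_{μ₁,μ₂≥1} (x₁^{μ₁}x₂^{μ₂}/(μ₁+μ₂)) ∏_i (∏_{a=0}^{μ_i-1}(μ_iτ+a)/μ_i!)`. -/
noncomputable def Gseries [CharZero K] (τ : K) : MvPowerSeries (Fin 2) K :=
  fun d =>
    if 1 ≤ d 0 ∧ 1 ≤ d 1 then
      -((τ + 1) / τ) * ((d 0 + d 1 : ℕ) : K)⁻¹ * pCoeff τ (d 0) * pCoeff τ (d 1)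
    else 0

/-- The two-variable Euler operator `x₁∂/∂x₁ + x₂∂/∂x₂`. -/
noncomputable def euler2 (A : MvPowerSeries (Fin 2) K) : MvPowerSeries (Fin 2) K :=
  fun d => ((d 0 + d 1 : ℕ) : K) * MvPowerSeries.coeff (R := K) d A

section Aux
variable [CharZero K]

/-- generalized binomial coefficient `a(a-1)...(a-k+1)/k!`. -/
noncomputable def gcK (a : K) (k : ℕ) : K :=
  (∏ i ∈ Finset.range k, (a - i)) / (k.factorial : K)

lemma gcK_zero (a : K) : gcK a 0 = 1 := by simp [gcK]

lemma gcK_pascal (a : K) (k : ℕ) :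
    gcK a (k + 1) = gcK (a - 1) (k + 1) + gcK (a - 1) k := by
  have h1 : ∏ i ∈ Finset.range (k + 1), (a - i) = a * ∏ i ∈ Finset.range k, ((a - 1) - i) := by
    rw [Finset.prod_range_succ']
    simp only [Nat.cast_zero, sub_zero]
    rw [mul_comm]
    congr 1
    apply Finset.prod_congr rfl
    intro i _
    push_cast
    ring
  have h2 : ∏ i ∈ Finset.range (k + 1), ((a - 1) - i)
      = (∏ i ∈ Finset.range k, ((a - 1) - i)) * (a - 1 - k) := Finset.prod_range_succ _ _
  have hk : ((k + 1).factorial : K) = (k.factorial : K) * (k + 1) := by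
    rw [Nat.factorial_succ]; push_cast; ring
  have hfk : (k.factorial : K) ≠ 0 := Nat.cast_ne_zero.2 (Nat.factorial_ne_zero k)
  have hk1 : ((k : K) + 1) ≠ 0 := by
    have : ((k + 1 : ℕ) : K) ≠ 0 := Nat.cast_ne_zero.2 (Nat.succ_ne_zero k)
    push_cast at this; exact this
  rw [gcK, gcK, gcK, h1, h2, hk]
  field_simp
  ring

lemma gcK_succ (a : K) (k : ℕ) :
    gcK a (k + 1) = gcK a k * (a - k) / (k + 1) := by
  have hfk : (k.factorial : K) ≠ 0 := Nat.cast_ne_zero.2 (Nat.factorial_ne_zero k)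
  have hk1 : ((k : K) + 1) ≠ 0 := by
    have : ((k + 1 : ℕ) : K) ≠ 0 := Nat.cast_ne_zero.2 (Nat.succ_ne_zero k)
    push_cast at this; exact this
  have hk : ((k + 1).factorial : K) = (k.factorial : K) * (k + 1) := by
    rw [Nat.factorial_succ]; push_cast; ring
  rw [gcK, gcK, Finset.prod_range_succ, hk]
  field_simp

/-- `A_k(x) = (x/(x+kz)) C(x+kz, k)`, in the polynomial-safe form `(x/k)C(x+kz-1,k-1)`. -/
noncomputable def Afun (z x : K) (k : ℕ) : K :=
  if k = 0 then 1 else x / k * gcK (x + k * z - 1) (k - 1)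

/-- `B_k(y) = C(y+kz, k)`. -/
noncomputable def Bfun (z y : K) (k : ℕ) : K := gcK (y + k * z) k

lemma Afun_zero (z x : K) : Afun z x 0 = 1 := rfl

lemma Afun_x_zero (z : K) (k : ℕ) (hk : k ≠ 0) : Afun z 0 k = 0 := by
  simp [Afun, hk]

lemma Bfun_pascal (z y : K) (k : ℕ) :
    Bfun z y (k + 1) = Bfun z (y - 1) (k + 1) + Bfun z (y + z - 1) k := by
  have h := gcK_pascal (y + (k + 1 : ℕ) * z) k
  rw [Bfun, Bfun, Bfun, h]
  congr 2
  · push_cast; ring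
  · push_cast; ring

lemma Afun_pascal (z x : K) (k : ℕ) (hk : k ≠ 0) :
    Afun z x k = Afun z (x - 1) k + Afun z (x + z - 1) (k - 1) := by
  rcases k with _ | k
  · exact absurd rfl hk
  rcases k with _ | j
  · -- k = 1
    simp only [Afun]
    norm_num [gcK_zero]
  · -- k = j + 2
    have hj1 : ((j : K) + 1) ≠ 0 := by
      have : ((j + 1 : ℕ) : K) ≠ 0 := Nat.cast_ne_zero.2 (Nat.succ_ne_zero j)
      push_cast at this; exact this
    have hj2 : ((j : K) + 2) ≠ 0 := by
      have : ((j + 2 : ℕ) : K) ≠ 0 := Nat.cast_ne_zero.2 (by omega)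
      push_cast at this; exact this
    have hcast2 : ((j + 1 + 1 : ℕ) : K) = (j : K) + 2 := by push_cast; ring
    have hcast1 : ((j + 1 : ℕ) : K) = (j : K) + 1 := by push_cast; ring
    simp only [Afun, Nat.succ_ne_zero, if_false, Nat.add_sub_cancel]
    rw [hcast2, hcast1]
    rw [show x + ((j : K) + 2) * z - 1 = (x + ((j : K) + 2) * z - 2) + 1 from by ring,
        show x - 1 + ((j : K) + 2) * z - 1 = x + ((j : K) + 2) * z - 2 from by ring,
        show x + z - 1 + ((j : K) + 1) * z - 1 = x + ((j : K) + 2) * z - 2 from by ring]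
    have hp : gcK ((x + ((j : K) + 2) * z - 2) + 1) (j + 1)
        = gcK (x + ((j : K) + 2) * z - 2) (j + 1) + gcK (x + ((j : K) + 2) * z - 2) j := by
      simpa using gcK_pascal ((x + ((j : K) + 2) * z - 2) + 1) j
    rw [hp, gcK_succ (x + ((j : K) + 2) * z - 2) j]
    generalize gcK (x + ((j : K) + 2) * z - 2) j = G
    field_simp
    ring

/-- `S_n(x,y) = ∑_{k=0}^n A_k(x) B_{n-k}(y)`. -/
noncomputable def Ssum (z x y : K) (n : ℕ) : K :=
  ∑ k ∈ Finset.range (n + 1), Afun z x k * Bfun z y (n - k)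

lemma Ssum_rec (z x y : K) (n : ℕ) :
    Ssum z x y (n + 1) = Ssum z (x - 1) y (n + 1) + Ssum z (x + z - 1) y n := by
  have hsplit : ∀ k, Afun z x k
      = Afun z (x - 1) k + (if k = 0 then 0 else Afun z (x + z - 1) (k - 1)) := by
    intro k
    rcases eq_or_ne k 0 with h | h
    · subst h; simp [Afun_zero]
    · rw [Afun_pascal z x k h, if_neg h]
  unfold Ssum
  rw [Finset.sum_congr rfl (fun k _ => by rw [hsplit k, add_mul]), Finset.sum_add_distrib]
  congr 1
  rw [Finset.sum_range_succ' (fun k =>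
    (if k = 0 then 0 else Afun z (x + z - 1) (k - 1)) * Bfun z y (n + 1 - k))]
  norm_num
  apply Finset.sum_congr rfl
  intro k _
  have : n + 1 - (k + 1) = n - k := by omega
  rw [this]

lemma Ssum_x_zero (z y : K) (n : ℕ) : Ssum z 0 y n = Bfun z y n := by
  unfold Ssum
  rw [Finset.sum_eq_single 0]
  · simp [Afun_zero]
  · intro k _ hk
    rw [Afun_x_zero z k hk, zero_mul]
  · intro h; simp at h

/-- polynomial version of `gcK (x + c) k` as a polynomial in `x`. -/
noncomputable def pgc (c : K) (k : ℕ) : Polynomial K :=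
  Polynomial.C ((k.factorial : K)⁻¹) * ∏ i ∈ Finset.range k, (Polynomial.X + Polynomial.C (c - i))

lemma pgc_eval (c x : K) (k : ℕ) : (pgc c k).eval x = gcK (x + c) k := by
  rw [pgc, Polynomial.eval_mul, Polynomial.eval_C, Polynomial.eval_prod]
  simp only [Polynomial.eval_add, Polynomial.eval_X, Polynomial.eval_C]
  rw [gcK, div_eq_inv_mul]
  congr 1
  exact Finset.prod_congr rfl (fun i _ => by ring)

noncomputable def pA (z : K) (k : ℕ) : Polynomial K :=
  if k = 0 then 1 else Polynomial.C ((k : K)⁻¹) * Polynomial.X * pgc ((k : K) * z - 1) (k - 1)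

lemma pA_eval (z x : K) (k : ℕ) : (pA z k).eval x = Afun z x k := by
  rcases eq_or_ne k 0 with h | h
  · subst h; simp [pA, Afun]
  · rw [pA, if_neg h, Afun, if_neg h]
    simp only [Polynomial.eval_mul, Polynomial.eval_C, Polynomial.eval_X]
    rw [pgc_eval, show x + ((k : K) * z - 1) = x + (k : K) * z - 1 from by ring]
    ring

noncomputable def pS (z y : K) (n : ℕ) : Polynomial K :=
  ∑ k ∈ Finset.range (n + 1), pA z k * Polynomial.C (Bfun z y (n - k))

lemma pS_eval (z x y : K) (n : ℕ) : (pS z y n).eval x = Ssum z x y n := by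
  simp [pS, Ssum, Polynomial.eval_finset_sum, pA_eval]

noncomputable def pB (z y : K) (n : ℕ) : Polynomial K := pgc (y + n * z) n

lemma pB_eval (z x y : K) (n : ℕ) : (pB z y n).eval x = Bfun z (x + y) n := by
  rw [pB, pgc_eval, Bfun, show x + (y + (n : K) * z) = x + y + (n : K) * z from by ring]

theorem rothe (z : K) : ∀ n : ℕ, ∀ x y : K, Ssum z x y n = Bfun z (x + y) n := by
  intro n
  induction n with
  | zero =>
    intro x y
    simp [Ssum, Afun_zero, Bfun, gcK_zero]
  | succ n ih =>
    have hnat : ∀ y : K, ∀ m : ℕ, Ssum z (m : K) y (n + 1) = Bfun z ((m : K) + y) (n + 1) := by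
      intro y m
      induction m with
      | zero => simpa using Ssum_x_zero z y (n + 1)
      | succ m ihm =>
        have h1 := Ssum_rec z ((m + 1 : ℕ) : K) y n
        have hc : ((m + 1 : ℕ) : K) - 1 = (m : K) := by push_cast; ring
        have h2 := Bfun_pascal z (((m + 1 : ℕ) : K) + y) n
        have hc2 : ((m + 1 : ℕ) : K) + y - 1 = (m : K) + y := by push_cast; ring
        rw [hc] at h1
        rw [hc2] at h2
        rw [h1, h2, ihm]
        have h3 : Ssum z (((m + 1 : ℕ) : K) + z - 1) y n
            = Bfun z (((m + 1 : ℕ) : K) + y + z - 1) n := by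
          rw [ih (((m + 1 : ℕ) : K) + z - 1) y]
          congr 1
          ring
        rw [h3]
    intro x y
    have hpoly : pS z y (n + 1) - pB z y (n + 1) = 0 := by
      apply Polynomial.eq_zero_of_infinite_isRoot
      apply Set.Infinite.mono (s := Set.range ((↑·) : ℕ → K))
      · rintro _ ⟨m, rfl⟩
        simp only [Set.mem_setOf_eq, Polynomial.IsRoot, Polynomial.eval_sub, pS_eval, pB_eval]
        rw [hnat y m, sub_self]
      · exact Set.infinite_range_of_injective Nat.cast_injective
    have := congrArg (Polynomial.eval x) hpoly
    rw [Polynomial.eval_sub, pS_eval, pB_eval, Polynomial.eval_zero, sub_eq_zero] at this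
    exact this

-- reflection helper
lemma prod_reflect (τ : K) (n m : ℕ) (h : m ≤ n) :
    ∏ i ∈ Finset.range m, ((n : K) * τ + (m : K) - 1 - i)
      = ∏ a ∈ Finset.range m, ((n : K) * τ + a) := by
  rw [← Finset.prod_range_reflect (fun a => (n : K) * τ + a) m]
  apply Finset.prod_congr rfl
  intro i hi
  rw [Finset.mem_range] at hi
  have hc : ((m - 1 - i : ℕ) : K) = (m : K) - 1 - i := by
    have h1 : m - 1 - i = m - (1 + i) := by omega
    rw [h1, Nat.cast_sub (by omega)]
    push_cast; ring
  rw [hc]; ring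

lemma B_neg_one (τ : K) (m : ℕ) : Bfun (τ + 1) (-1) m = pCoeff τ m := by
  rw [Bfun, gcK, pCoeff]
  congr 1
  rw [← prod_reflect τ m m le_rfl]
  apply Finset.prod_congr rfl
  intro i _
  ring

lemma omega_eq_gcK (τ : K) (n : ℕ) (hn : n ≠ 0) :
    omegaCoeff τ n = gcK ((n : K) * (τ + 1) - 2) (n - 1) / n := by
  rw [omegaCoeff, if_neg hn, gcK]
  have hfac : (n.factorial : K) = ((n - 1).factorial : K) * n := by
    conv_lhs => rw [show n = (n - 1) + 1 by omega]
    rw [Nat.factorial_succ]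
    push_cast [Nat.cast_sub (by omega : 1 ≤ n)]
    ring
  rw [hfac, ← prod_reflect τ n (n - 1) (by omega)]
  rw [div_div]
  congr 1
  apply Finset.prod_congr rfl
  intro i _
  have : ((n - 1 : ℕ) : K) = (n : K) - 1 := by
    rw [Nat.cast_sub (by omega : 1 ≤ n)]; push_cast; ring
  rw [this]; ring

lemma A_neg_one (τ : K) (n : ℕ) (hn : n ≠ 0) :
    Afun (τ + 1) (-1) n = -omegaCoeff τ n := by
  rw [Afun, if_neg hn, omega_eq_gcK τ n hn]
  rw [show (-1 : K) + (n : K) * (τ + 1) - 1 = (n : K) * (τ + 1) - 2 from by ring]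
  field_simp





lemma gcK2_eq (τ : K) (n : ℕ) (hn : n ≠ 0) :
    gcK ((n : K) * (τ + 1) - 2) n = ((n : K) * τ - 1) * omegaCoeff τ n := by
  have hnK : (n : K) ≠ 0 := Nat.cast_ne_zero.2 hn
  obtain ⟨m, rfl⟩ : ∃ m, n = m + 1 := ⟨n - 1, by omega⟩
  rw [gcK_succ _ m, omega_eq_gcK τ (m + 1) hn]
  simp only [Nat.add_sub_cancel]
  have hm1 : ((m + 1 : ℕ) : K) = (m : K) + 1 := by push_cast; ring
  rw [hm1]
  field_simp
  ring

lemma p_eq (τ : K) (n : ℕ) (hn : n ≠ 0) :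
    pCoeff τ n = ((n : K) * τ + n - 1) * omegaCoeff τ n := by
  have hnK : (n : K) ≠ 0 := Nat.cast_ne_zero.2 hn
  have h1 : pCoeff τ n = gcK ((n : K) * (τ + 1) - 1) n := by
    rw [← B_neg_one]
    rw [Bfun]
    congr 1
    ring
  obtain ⟨m, rfl⟩ : ∃ m, n = m + 1 := ⟨n - 1, by omega⟩
  have h2 := gcK_pascal (((m + 1 : ℕ) : K) * (τ + 1) - 1) m
  rw [show ((m + 1 : ℕ) : K) * (τ + 1) - 1 - 1 = ((m + 1 : ℕ) : K) * (τ + 1) - 2 from by ring]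
    at h2
  rw [h1, h2, gcK2_eq τ (m + 1) hn, omega_eq_gcK τ (m + 1) hn]
  simp only [Nat.add_sub_cancel]
  have hm1 : ((m : K) + 1) ≠ 0 := by push_cast at hnK; exact hnK
  push_cast
  field_simp
  ring

lemma pCoeff_zero (τ : K) : pCoeff τ 0 = 1 := by simp [pCoeff]

lemma RT (τ : K) (n : ℕ) :
    ∑ k ∈ Finset.range (n + 1), (if k = 0 then 1 else -(omegaCoeff τ k)) * pCoeff τ (n - k)
      = gcK ((n : K) * (τ + 1) - 2) n := by
  have h := rothe (τ + 1) n (-1 : K) (-1 : K)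
  rw [Ssum] at h
  have hB : Bfun (τ + 1) ((-1 : K) + -1) n = gcK ((n : K) * (τ + 1) - 2) n := by
    rw [Bfun]; congr 1; ring
  rw [hB] at h
  rw [← h]
  apply Finset.sum_congr rfl
  intro k _
  rw [B_neg_one]
  congr 1
  rcases eq_or_ne k 0 with h0 | h0
  · subst h0; simp [Afun]
  · rw [A_neg_one τ k h0, if_neg h0]

lemma key_conv (τ : K) (n : ℕ) (hn : n ≠ 0) :
    ∑ k ∈ Finset.range (n + 1), (if k = 0 then 1 else -(τ + 1) * omegaCoeff τ k) *
        (if n - k = 0 then 0 else pCoeff τ (n - k))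
      = τ * omegaCoeff τ n := by
  have hsplit : ∀ k ∈ Finset.range (n + 1),
      (if k = 0 then 1 else -(τ + 1) * omegaCoeff τ k)
          * (if n - k = 0 then 0 else pCoeff τ (n - k))
      = (τ + 1) * ((if k = 0 then 1 else -(omegaCoeff τ k)) * pCoeff τ (n - k))
        - ((if k = 0 then τ * pCoeff τ n else 0)
           + (if k = n then (τ + 1) * (if k = 0 then 1 else -(omegaCoeff τ k)) else 0)) := by
    intro k hk
    rw [Finset.mem_range] at hk
    rcases eq_or_ne k 0 with h0 | h0
    · subst h0
      rw [if_neg (by omega : ¬ n - 0 = 0), if_neg (Ne.symm hn)]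
      simp only [if_pos rfl, Nat.sub_zero, if_true]
      ring
    · rcases eq_or_ne k n with h1 | h1
      · subst h1
        simp only [if_neg h0, Nat.sub_self, if_pos rfl, if_true, pCoeff_zero]
        ring
      · have h2 : ¬ (n - k = 0) := by omega
        simp only [if_neg h0, if_neg h1, if_neg h2]
        ring
  rw [Finset.sum_congr rfl hsplit, Finset.sum_sub_distrib, ← Finset.mul_sum, RT τ n,
    Finset.sum_add_distrib, Finset.sum_ite_eq' (Finset.range (n + 1)) 0,
    Finset.sum_ite_eq' (Finset.range (n + 1)) n]
  rw [if_pos (Finset.mem_range.2 (by omega)), if_pos (Finset.mem_range.2 (by omega)),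
    if_neg hn, gcK2_eq τ n hn, p_eq τ n hn]
  ring


/-! ### Power series in one of the two variables -/

/-- A power series in the single variable `x_i` with coefficients `c`. -/
noncomputable def Vser (c : ℕ → K) (i : Fin 2) : MvPowerSeries (Fin 2) K :=
  fun d => if d = Finsupp.single i (d i) then c (d i) else 0

lemma coeff_Vser (c : ℕ → K) (i : Fin 2) (d : Fin 2 →₀ ℕ) :
    MvPowerSeries.coeff (R := K) d (Vser c i) = if d = Finsupp.single i (d i) then c (d i) else 0 :=
  rfl

lemma OmegaVar_eq_Vser (τ : K) (i : Fin 2) : OmegaVar τ i = Vser (omegaCoeff τ) i := rfl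

lemma Vser_mul_Vser (c b : ℕ → K) (i : Fin 2) :
    Vser c i * Vser b i
      = Vser (fun n => ∑ kv ∈ Finset.HasAntidiagonal.antidiagonal n, c kv.1 * b kv.2) i := by
  apply MvPowerSeries.ext
  intro d
  rw [MvPowerSeries.coeff_mul, coeff_Vser]
  rcases eq_or_ne d (Finsupp.single i (d i)) with hd | hd
  · rw [if_pos hd]
    conv_lhs => rw [hd]
    rw [Finsupp.antidiagonal_single, Finset.sum_map]
    apply Finset.sum_congr rfl
    intro kv _
    simp [coeff_Vser, Finsupp.single_eq_same]
  · rw [if_neg hd]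
    apply Finset.sum_eq_zero
    intro p hp
    rw [Finset.HasAntidiagonal.mem_antidiagonal] at hp
    by_cases h1 : p.1 = Finsupp.single i (p.1 i)
    · by_cases h2 : p.2 = Finsupp.single i (p.2 i)
      · exfalso
        apply hd
        have hdd : d = Finsupp.single i (p.1 i + p.2 i) := by
          rw [Finsupp.single_add, ← h1, ← h2, hp]
        rw [hdd]
        simp [Finsupp.single_eq_same]
      · rw [coeff_Vser b i p.2, if_neg h2, mul_zero]
    · rw [coeff_Vser c i p.1, if_neg h1, zero_mul]

lemma C_mul_Vser (r : K) (c : ℕ → K) (i : Fin 2) :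
    MvPowerSeries.C (σ := Fin 2) (R := K) r * Vser c i = Vser (fun n => r * c n) i := by
  apply MvPowerSeries.ext
  intro d
  rw [MvPowerSeries.coeff_C_mul, coeff_Vser, coeff_Vser]
  split <;> simp

lemma one_sub_eq_Vser (τ : K) (i : Fin 2) :
    1 - MvPowerSeries.C (σ := Fin 2) (R := K) (τ + 1) * OmegaVar τ i
      = Vser (fun n => if n = 0 then 1 else -(τ + 1) * omegaCoeff τ n) i := by
  rw [OmegaVar_eq_Vser, C_mul_Vser]
  apply MvPowerSeries.ext
  intro d
  rw [map_sub, MvPowerSeries.coeff_one, coeff_Vser, coeff_Vser]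
  rcases eq_or_ne d (Finsupp.single i (d i)) with hd | hd
  · rw [if_pos hd, if_pos hd]
    rcases eq_or_ne (d i) 0 with h0 | h0
    · have : d = 0 := by rw [hd, h0, Finsupp.single_zero]
      rw [if_pos this, if_pos h0, h0]
      simp [omegaCoeff]
    · have : d ≠ 0 := by
        intro h; apply h0; rw [h]; simp
      rw [if_neg this, if_neg h0]
      ring
  · rw [if_neg hd, if_neg hd]
    have : d ≠ 0 := by
      intro h
      apply hd
      rw [h]
      simp
    rw [if_neg this, sub_zero]

lemma coeff_Vser0_mul_Vser1 (a b : ℕ → K) (d : Fin 2 →₀ ℕ) :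
    MvPowerSeries.coeff (R := K) d (Vser a 0 * Vser b 1) = a (d 0) * b (d 1) := by
  rw [MvPowerSeries.coeff_mul]
  have hpair : Finsupp.single (0 : Fin 2) (d 0) + Finsupp.single 1 (d 1) = d := by
    ext j
    match j with
    | 0 => simp [Finsupp.single_apply]
    | 1 => simp [Finsupp.single_apply]
  rw [Finset.sum_eq_single (Finsupp.single (0 : Fin 2) (d 0), Finsupp.single (1 : Fin 2) (d 1))]
  · simp [coeff_Vser, Finsupp.single_eq_same, Finsupp.single_apply]
  · rintro ⟨u, v⟩ hp hne
    rw [Finset.HasAntidiagonal.mem_antidiagonal] at hp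
    by_cases h1 : u = Finsupp.single 0 (u 0)
    · by_cases h2 : v = Finsupp.single 1 (v 1)
      · exfalso
        apply hne
        have hu0 : u 0 = d 0 := by
          have h := DFunLike.congr_fun hp (0 : Fin 2)
          rw [Finsupp.add_apply] at h
          rw [← h, h2]
          simp [Finsupp.single_apply]
        have hv1 : v 1 = d 1 := by
          have h := DFunLike.congr_fun hp (1 : Fin 2)
          rw [Finsupp.add_apply] at h
          rw [← h, h1]
          simp [Finsupp.single_apply]
        simp only [Prod.mk.injEq]
        constructor
        · rw [h1, hu0]
        · rw [h2, hv1]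
      · rw [coeff_Vser b 1 v, if_neg h2, mul_zero]
    · rw [coeff_Vser a 0 u, if_neg h1, zero_mul]
  · intro habs
    exact absurd (Finset.HasAntidiagonal.mem_antidiagonal.2 hpair) habs

/-- `p'`, the coefficients of `∑_{m≥1} p_m x^m`. -/
noncomputable def pC' (τ : K) (n : ℕ) : K := if n = 0 then 0 else pCoeff τ n

lemma euler2_G_eq (τ : K) (hτ : τ ≠ 0) :
    euler2 (Gseries τ)
      = MvPowerSeries.C (σ := Fin 2) (R := K) (-((τ + 1) / τ)) * (Vser (pC' τ) 0 * Vser (pC' τ) 1) := by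
  apply MvPowerSeries.ext
  intro d
  rw [MvPowerSeries.coeff_C_mul, coeff_Vser0_mul_Vser1]
  show ((d 0 + d 1 : ℕ) : K) * MvPowerSeries.coeff (R := K) d (Gseries τ) = _
  show ((d 0 + d 1 : ℕ) : K) *
    (if 1 ≤ d 0 ∧ 1 ≤ d 1 then
      -((τ + 1) / τ) * ((d 0 + d 1 : ℕ) : K)⁻¹ * pCoeff τ (d 0) * pCoeff τ (d 1)
    else 0) = _
  by_cases h : 1 ≤ d 0 ∧ 1 ≤ d 1
  · rw [if_pos h]
    have hs : ((d 0 + d 1 : ℕ) : K) ≠ 0 := by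
      have : d 0 + d 1 ≠ 0 := by omega
      exact Nat.cast_ne_zero.2 this
    simp only [pC', if_neg (by omega : ¬ d 0 = 0), if_neg (by omega : ¬ d 1 = 0)]
    have hs' : ((d 0 : K)) + ((d 1 : K)) ≠ 0 := by push_cast at hs; exact hs
    field_simp
  · rw [if_neg h, mul_zero]
    rcases Nat.lt_or_ge (d 0) 1 with h0 | h0
    · simp only [pC', if_pos (by omega : d 0 = 0)]
      ring
    · have h1 : d 1 = 0 := by omega
      simp only [pC', if_pos h1]
      ring

lemma Vq_mul_Vp (τ : K) (i : Fin 2) :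
    Vser (fun n => if n = 0 then 1 else -(τ + 1) * omegaCoeff τ n) i * Vser (pC' τ) i
      = MvPowerSeries.C (σ := Fin 2) (R := K) τ * OmegaVar τ i := by
  rw [OmegaVar_eq_Vser, C_mul_Vser, Vser_mul_Vser]
  have hc : ∀ n : ℕ, (∑ kv ∈ Finset.HasAntidiagonal.antidiagonal n,
      (if kv.1 = 0 then 1 else -(τ + 1) * omegaCoeff τ kv.1) * pC' τ kv.2)
      = τ * omegaCoeff τ n := by
    intro n
    rw [Finset.Nat.sum_antidiagonal_eq_sum_range_succ_mk]
    rcases eq_or_ne n 0 with h0 | h0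
    · subst h0
      simp [pC', omegaCoeff]
    · rw [← key_conv τ n h0]
      apply Finset.sum_congr rfl
      intro k _
      simp only [pC']
  simp only [hc]

lemma constCoeff_Omega (τ : K) (i : Fin 2) :
    MvPowerSeries.constantCoeff (σ := Fin 2) (R := K) (OmegaVar τ i) = 0 := by
  have h : MvPowerSeries.coeff (R := K) (0 : Fin 2 →₀ ℕ) (OmegaVar τ i) = 0 := by
    show (if (0 : Fin 2 →₀ ℕ) = Finsupp.single i ((0 : Fin 2 →₀ ℕ) i)
      then omegaCoeff τ ((0 : Fin 2 →₀ ℕ) i) else 0) = 0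
    simp [omegaCoeff]
  rwa [MvPowerSeries.coeff_zero_eq_constantCoeff] at h

theorem euler2_G' (τ : K) (hτ : τ ≠ 0) :
    euler2 (Gseries τ)
      = -(MvPowerSeries.C (σ := Fin 2) (R := K) (τ * (τ + 1))) * OmegaVar τ 0 * OmegaVar τ 1 *
          ((1 - MvPowerSeries.C (σ := Fin 2) (R := K) (τ + 1) * OmegaVar τ 0) *
            (1 - MvPowerSeries.C (σ := Fin 2) (R := K) (τ + 1) * OmegaVar τ 1))⁻¹ := by
  have hconst : MvPowerSeries.constantCoeff (σ := Fin 2) (R := K)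
      ((1 - MvPowerSeries.C (σ := Fin 2) (R := K) (τ + 1) * OmegaVar τ 0) *
        (1 - MvPowerSeries.C (σ := Fin 2) (R := K) (τ + 1) * OmegaVar τ 1)) ≠ 0 := by
    simp [map_mul, map_sub, map_one, constCoeff_Omega]
  rw [MvPowerSeries.eq_mul_inv_iff_mul_eq hconst]
  rw [euler2_G_eq τ hτ, one_sub_eq_Vser, one_sub_eq_Vser]
  have hre : MvPowerSeries.C (σ := Fin 2) (R := K) (-((τ + 1) / τ)) * (Vser (pC' τ) 0 * Vser (pC' τ) 1)
        * (Vser (fun n => if n = 0 then 1 else -(τ + 1) * omegaCoeff τ n) 0 *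
           Vser (fun n => if n = 0 then 1 else -(τ + 1) * omegaCoeff τ n) 1)
      = MvPowerSeries.C (σ := Fin 2) (R := K) (-((τ + 1) / τ)) *
        ((Vser (fun n => if n = 0 then 1 else -(τ + 1) * omegaCoeff τ n) 0 * Vser (pC' τ) 0) *
         (Vser (fun n => if n = 0 then 1 else -(τ + 1) * omegaCoeff τ n) 1 * Vser (pC' τ) 1)) := by
    ring
  rw [hre, Vq_mul_Vp τ 0, Vq_mul_Vp τ 1]
  have hC : MvPowerSeries.C (σ := Fin 2) (R := K) (-((τ + 1) / τ)) * MvPowerSeries.C (σ := Fin 2) (R := K) τ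
        * MvPowerSeries.C (σ := Fin 2) (R := K) τ
      = -(MvPowerSeries.C (σ := Fin 2) (R := K) (τ * (τ + 1))) := by
    rw [← map_mul, ← map_mul, ← map_neg]
    congr 1
    field_simp
  rw [← hC]
  ring

end Aux

/-- `(x₁∂/∂x₁ + x₂∂/∂x₂)G = -τ(τ+1)·ω₁ω₂/((1-(τ+1)ω₁)(1-(τ+1)ω₂))`. -/
theorem euler2_G [CharZero K] (τ : K) (hτ : τ ≠ 0) :
    euler2 (Gseries τ)
      = -(MvPowerSeries.C (σ := Fin 2) (R := K) (τ * (τ + 1))) * OmegaVar τ 0 * OmegaVar τ 1 *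
          ((1 - MvPowerSeries.C (σ := Fin 2) (R := K) (τ + 1) * OmegaVar τ 0) *
            (1 - MvPowerSeries.C (σ := Fin 2) (R := K) (τ + 1) * OmegaVar τ 1))⁻¹ := by
  exact euler2_G' τ hτ
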